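/- Let X be a group acting transitively on a set C with minimum-distance-5 structure as follows: C is a code in a Hamming graph with δ ≥ 5, X ≤ Aut(C) acts transitively on C, C₁ and C₂, and Δ is a block of imprimitivity for X on C. Then the setwise stabiliser X_Δ acts transitively on each of Δ, Δ₁ and Δ₂, where Δ_i is the set of vertices at distance i from Δ. -/

import Mathlib

/-- Distance from a vertex of the Hamming graph to a set of vertices. -/
noncomputable def distToSet {m q : ℕ} (S : Set (Fin m → Fin q))
    (v : Fin m → Fin q) : ℕ :=
  sInf ((hammingDist v) '' S)

/-- If `C` is an `(X,2)`-neighbour-transitive code with `δ ≥ 5` and `Δ` is a block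
of imprimitivity for `X` on `C`, then the setwise stabiliser of `Δ` acts
transitively on each of `Δ = Δ₀`, `Δ₁` and `Δ₂`. -/
theorem stmt_12 {m q : ℕ} (X : Subgroup (Equiv.Perm (Fin m → Fin q)))
    (hiso : ∀ x ∈ X, ∀ u v : Fin m → Fin q,
      hammingDist (x u) (x v) = hammingDist u v)
    (C Δ : Set (Fin m → Fin q))
    (hinv : ∀ x ∈ X, ∀ v, v ∈ C ↔ x v ∈ C)
    (hδ : ∀ α ∈ C, ∀ β ∈ C, α ≠ β → 5 ≤ hammingDist α β)
    (htransC : ∀ a ∈ C, ∀ b ∈ C, ∃ x ∈ X, x a = b)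
    (htrans12 : ∀ i ∈ ({1, 2} : Set ℕ), ∀ a b : Fin m → Fin q,
      distToSet C a = i → distToSet C b = i → ∃ x ∈ X, x a = b)
    (hΔC : Δ ⊆ C) (hΔne : Δ.Nonempty)
    (hblock : ∀ x ∈ X, (fun v => x v) '' Δ = Δ ∨
      Disjoint ((fun v => x v) '' Δ) Δ) :
    ∀ i ∈ ({0, 1, 2} : Set ℕ), ∀ a b : Fin m → Fin q,
      distToSet Δ a = i → distToSet Δ b = i →
        ∃ x ∈ X, (fun v => x v) '' Δ = Δ ∧ x a = b := by
  -- distance to Δ is attained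
  have hattain : ∀ a : Fin m → Fin q, ∃ α ∈ Δ, hammingDist a α = distToSet Δ a := by
    intro a
    have hne : ((hammingDist a) '' Δ).Nonempty := hΔne.image _
    obtain ⟨α, hα, hd⟩ := Nat.sInf_mem hne
    exact ⟨α, hα, hd⟩
  intro i hi a b ha hb
  obtain ⟨α, hαΔ, hαd⟩ := hattain a
  obtain ⟨β, hβΔ, hβd⟩ := hattain b
  rw [ha] at hαd
  rw [hb] at hβd
  -- helper to conclude the block condition from nondisjointness
  have hblk : ∀ x ∈ X, ∀ c, c ∈ Δ → (x : Equiv.Perm _) c ∈ Δ →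
      (fun v => x v) '' Δ = Δ := by
    intro x hx c hc hxc
    rcases hblock x hx with h | h
    · exact h
    · exact absurd h (Set.not_disjoint_iff.mpr ⟨x c, ⟨c, hc, rfl⟩, hxc⟩)
  rcases hi with hi0 | hi12
  · -- i = 0 : a, b ∈ Δ
    subst hi0
    have haα : a = α := hammingDist_eq_zero.mp hαd
    have hbβ : b = β := hammingDist_eq_zero.mp hβd
    subst haα; subst hbβ
    obtain ⟨x, hx, hxab⟩ := htransC a (hΔC hαΔ) b (hΔC hβΔ)
    exact ⟨x, hx, hblk x hx a hαΔ (hxab ▸ hβΔ), hxab⟩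
  · -- i = 1 or 2
    have hi12' : i = 1 ∨ i = 2 := by simpa using hi12
    (
      have hile : i ≤ 2 := by omega
      have hipos : 1 ≤ i := by omega
      -- distToSet C · = i for both a and b
      have key : ∀ c : Fin m → Fin q, ∀ γ ∈ Δ, hammingDist c γ = i →
          (∀ γ' ∈ Δ, i ≤ hammingDist c γ') → distToSet C c = i := by
        intro c γ hγΔ hγd _
        refine le_antisymm (Nat.sInf_le ⟨γ, hΔC hγΔ, hγd⟩) ?_
        refine le_csInf (hΔne.image _ |>.mono (Set.image_mono hΔC)) ?_
        rintro n ⟨γ', hγ'C, rfl⟩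
        by_contra hlt
        push_neg at hlt
        have hne : γ' ≠ γ := by
          intro h; subst h; omega
        have : hammingDist γ' γ ≤ hammingDist γ' c + hammingDist c γ :=
          hammingDist_triangle _ _ _
        have h5 := hδ γ' hγ'C γ (hΔC hγΔ) hne
        rw [hammingDist_comm γ' c] at this
        omega
      have hlowa : ∀ γ' ∈ Δ, i ≤ hammingDist a γ' := by
        intro γ' hγ'
        have := Nat.sInf_le (Set.mem_image_of_mem (hammingDist a) hγ')
        rw [show sInf ((hammingDist a) '' Δ) = distToSet Δ a from rfl, ha] at this
        exact this
      have hlowb : ∀ γ' ∈ Δ, i ≤ hammingDist b γ' := by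
        intro γ' hγ'
        have := Nat.sInf_le (Set.mem_image_of_mem (hammingDist b) hγ')
        rw [show sInf ((hammingDist b) '' Δ) = distToSet Δ b from rfl, hb] at this
        exact this
      have hCa := key a α hαΔ hαd hlowa
      have hCb := key b β hβΔ hβd hlowb
      obtain ⟨x, hx, hxab⟩ := htrans12 i (by rcases hi12' with h | h <;> simp [h]) a b hCa hCb
      -- show x α = β
      have hxαC : (x : Equiv.Perm _) α ∈ C := (hinv x hx α).mp (hΔC hαΔ)
      have hdbxα : hammingDist b ((x : Equiv.Perm _) α) = i := by
        rw [← hxab, hiso x hx a α, hαd]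
      have hxαβ : (x : Equiv.Perm _) α = β := by
        by_contra hne
        have htri : hammingDist ((x : Equiv.Perm _) α) β ≤
            hammingDist ((x : Equiv.Perm _) α) b + hammingDist b β :=
          hammingDist_triangle _ _ _
        have h5 := hδ _ hxαC β (hΔC hβΔ) hne
        rw [hammingDist_comm _ b] at htri
        omega
      exact ⟨x, hx, hblk x hx α hαΔ (hxαβ ▸ hβΔ), hxab⟩)
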